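/- Fix q > 0, an integer n ≥ 1, 0 < λ < n, and an integer r with 1 ≤ r ≤ n. Then Z_{n,λ,q}[B_r] ≤ Z_{n,λ,q}[L] · (1 − λ/n)^{−rn/2}. -/

import Mathlib

open Filter Topology Set

noncomputable section

/-- Size of the connected component of `K_n(ω)` containing the vertex `v`. -/
def compSize {n : ℕ} (G : SimpleGraph (Fin n)) (v : Fin n) : ℕ :=
  (G.connectedComponentMk v).supp.ncard

/-- Random cluster weight of a configuration `G` on the complete graph `K_m`,
with edge weight `p` and cluster weight `q`. -/
def rcW (m : ℕ) (p q : ℝ) (G : SimpleGraph (Fin m)) : ℝ :=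
  p ^ G.edgeSet.ncard * (1 - p) ^ (m * (m - 1) / 2 - G.edgeSet.ncard) *
    q ^ Nat.card G.ConnectedComponent

/-- Total random-cluster weight of an event, with explicit edge weight `p`. -/
def ZP (m : ℕ) (p q : ℝ) (A : Set (SimpleGraph (Fin m))) : ℝ :=
  ∑ᶠ G ∈ A, rcW m p q G

/-- `Z_{n,λ,q}[A]`, i.e. the total weight of the event `A` with `p = λ/n`. -/
def Zrc (n : ℕ) (lam q : ℝ) (A : Set (SimpleGraph (Fin n))) : ℝ :=
  ZP n (lam / n) q A

/-- The partition function `Z_{n,λ,q}`. -/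
def Ztot (n : ℕ) (lam q : ℝ) : ℝ := Zrc n lam q Set.univ

/-- The random cluster probability `φ_{n,λ,q}[A]`. -/
def phiRC (n : ℕ) (lam q : ℝ) (A : Set (SimpleGraph (Fin n))) : ℝ :=
  Zrc n lam q A / Ztot n lam q

/-- The event `K` that the configuration is connected. -/
def Kev (n : ℕ) : Set (SimpleGraph (Fin n)) := {G | G.Connected}

/-- The event `B_r` that no connected component has size larger than `r`. -/
def Bev (n : ℕ) (r : ℝ) : Set (SimpleGraph (Fin n)) :=
  {G | ∀ v, (compSize G v : ℝ) ≤ r}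

/-- The event `L` that the configuration is acyclic. -/
def Lev (n : ℕ) : Set (SimpleGraph (Fin n)) := {G | G.IsAcyclic}

/-- The set `V_r` of vertices lying in components of size larger than `r`. -/
def Vbig {n : ℕ} (G : SimpleGraph (Fin n)) (r : ℝ) : Set (Fin n) :=
  {v | r < (compSize G v : ℝ)}

/-- The number `N_r` of connected components of size larger than `r`. -/
def Nbig {n : ℕ} (G : SimpleGraph (Fin n)) (r : ℝ) : ℕ :=
  {C : G.ConnectedComponent | r < (C.supp.ncard : ℝ)}.ncard

def pi1 (x : ℝ) : ℝ := 1 - Real.exp (-x)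

def Psi (x : ℝ) : ℝ := min (Real.log x - (x - 1/x) / 2) 0

def Sent (θ : ℝ) : ℝ := θ * Real.log θ + (1 - θ) * Real.log (1 - θ)

def Phi (θ lam q : ℝ) : ℝ :=
  -Sent θ + (1 - θ) * Real.log (1 - pi1 (lam * θ)) + θ * Real.log (pi1 (lam * θ)) +
    (1 - θ) * (Psi (lam * (1 - θ) / q) - ((q - 1) / (2 * q)) * (lam * (1 - θ)) + Real.log q)

namespace StmtAux

open SimpleGraph

attribute [local instance] Classical.propDecidable

variable {V : Type*}

lemma reachable_of_adj_reachable {H F : SimpleGraph V}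
    (h : ∀ a b, H.Adj a b → F.Reachable a b) {a b : V} (hr : H.Reachable a b) :
    F.Reachable a b := by
  obtain ⟨w⟩ := hr
  induction w with
  | nil => exact Reachable.refl _
  | cons h' _ ih => exact (h _ _ h').trans ih

lemma reachable_deleteEdges_iff {G : SimpleGraph V} {u v : V} (huv : G.Adj u v)
    (h : (G.deleteEdges {s(u, v)}).Reachable u v) (a b : V) :
    (G.deleteEdges {s(u, v)}).Reachable a b ↔ G.Reachable a b := by
  constructor
  · exact fun hr => hr.mono (deleteEdges_le _)
  · refine fun hr => reachable_of_adj_reachable (fun a b hab => ?_) hr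
    by_cases he : s(a, b) = s(u, v)
    · rw [Sym2.eq_iff] at he
      rcases he with ⟨rfl, rfl⟩ | ⟨rfl, rfl⟩
      · exact h
      · exact h.symm
    · exact SimpleGraph.Adj.reachable (by simp [deleteEdges_adj, hab, he])

lemma exists_spanning_forest [Fintype V] (G : SimpleGraph V) :
    ∃ F : SimpleGraph V, F ≤ G ∧ F.IsAcyclic ∧
      ∀ a b, F.Reachable a b ↔ G.Reachable a b := by
  classical
  generalize hk : G.edgeSet.ncard = k
  induction k using Nat.strong_induction_on generalizing G with
  | _ k ih =>
  by_cases hG : G.IsAcyclic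
  · exact ⟨G, le_rfl, hG, fun _ _ => Iff.rfl⟩
  · rw [isAcyclic_iff_forall_edge_isBridge] at hG
    push_neg at hG
    obtain ⟨e, he, hbr⟩ := hG
    induction e using Sym2.ind with
    | _ u v =>
    have huv : G.Adj u v := he
    rw [isBridge_iff] at hbr
    push_neg at hbr
    have hre : (G.deleteEdges {s(u, v)}).Reachable u v := hbr
    have hcard : (G.deleteEdges {s(u, v)}).edgeSet.ncard < k := by
      rw [edgeSet_deleteEdges]
      exact hk ▸ Set.ncard_diff_singleton_lt_of_mem he (Set.toFinite _)
    obtain ⟨F, hF1, hF2, hF3⟩ := ih _ hcard (G.deleteEdges {s(u, v)}) rfl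
    exact ⟨F, hF1.trans (deleteEdges_le _), hF2,
      fun a b => (hF3 a b).trans (reachable_deleteEdges_iff huv hre a b)⟩

lemma card_comp_eq {F G : SimpleGraph V}
    (h : ∀ a b, F.Reachable a b ↔ G.Reachable a b) :
    Nat.card F.ConnectedComponent = Nat.card G.ConnectedComponent :=
  Nat.card_congr (Quot.congrRight h)

lemma supp_eq {F G : SimpleGraph V}
    (h : ∀ a b, F.Reachable a b ↔ G.Reachable a b) (v : V) :
    (F.connectedComponentMk v).supp = (G.connectedComponentMk v).supp := by
  ext u
  simp only [ConnectedComponent.mem_supp_iff, ConnectedComponent.eq]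
  exact reachable_congr h u v
where reachable_congr {F G : SimpleGraph V}
    (h : ∀ a b, F.Reachable a b ↔ G.Reachable a b) (u v : V) :
    F.Reachable u v ↔ G.Reachable u v := h u v

/-- The union of cliques on the components of `F`. -/
def clG (F : SimpleGraph V) : SimpleGraph V := SimpleGraph.fromRel F.Reachable

lemma clG_adj {F : SimpleGraph V} {a b : V} :
    (clG F).Adj a b ↔ a ≠ b ∧ F.Reachable a b := by
  rw [clG, fromRel_adj]
  constructor
  · rintro ⟨hne, h | h⟩
    exacts [⟨hne, h⟩, ⟨hne, h.symm⟩]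
  · rintro ⟨hne, h⟩; exact ⟨hne, Or.inl h⟩

lemma le_clG (F : SimpleGraph V) : F ≤ clG F :=
  fun _ _ hab => clG_adj.mpr ⟨hab.ne, hab.reachable⟩

lemma clG_reach {F : SimpleGraph V} (a b : V) :
    (clG F).Reachable a b ↔ F.Reachable a b :=
  ⟨reachable_of_adj_reachable (fun _ _ h => (clG_adj.mp h).2),
    fun h => h.mono (le_clG F)⟩

lemma reach_sandwich {F ω : SimpleGraph V} (h1 : F ≤ ω) (h2 : ω ≤ clG F) (a b : V) :
    ω.Reachable a b ↔ F.Reachable a b :=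
  ⟨fun h => (clG_reach a b).mp (h.mono h2), fun h => h.mono h1⟩


lemma ncard_edgeSet [Fintype V] (G : SimpleGraph V) [Fintype G.edgeSet] :
    G.edgeSet.ncard = G.edgeFinset.card := by
  rw [edgeFinset, Set.ncard_eq_toFinset_card']

lemma ncard_edgeSet_le [Fintype V] (G : SimpleGraph V) :
    G.edgeSet.ncard ≤ Fintype.card V * (Fintype.card V - 1) / 2 := by
  classical
  calc G.edgeSet.ncard ≤ (⊤ : SimpleGraph V).edgeSet.ncard :=
        Set.ncard_le_ncard (edgeSet_mono le_top) (Set.toFinite _)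
    _ = (⊤ : SimpleGraph V).edgeFinset.card := ncard_edgeSet _
    _ = (Fintype.card V).choose 2 := card_edgeFinset_top_eq_card_choose_two
    _ = Fintype.card V * (Fintype.card V - 1) / 2 := Nat.choose_two_right _

lemma two_mul_clG_edges_le {n r : ℕ} (F : SimpleGraph (Fin n))
    (hB : ∀ v, compSize F v ≤ r) :
    2 * (clG F).edgeSet.ncard ≤ n * r := by
  classical
  have hdeg : ∀ v, (clG F).degree v + 1 ≤ r := by
    intro v
    have hsub : (clG F).neighborSet v ⊆ (F.connectedComponentMk v).supp \ {v} := by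
      intro u hu
      rw [mem_neighborSet, clG_adj] at hu
      refine ⟨?_, fun hmem => hu.1 (Set.mem_singleton_iff.mp hmem).symm⟩
      rw [ConnectedComponent.mem_supp_iff, ConnectedComponent.eq]
      exact hu.2.symm
    have hdv : (clG F).degree v = ((clG F).neighborSet v).ncard := by
      show ((clG F).neighborFinset v).card = _
      rw [← Set.ncard_coe_finset ((clG F).neighborFinset v), neighborFinset_def,
        Set.coe_toFinset]
    have hv : v ∈ (F.connectedComponentMk v).supp := by
      rw [ConnectedComponent.mem_supp_iff]
    have h1 : ((clG F).neighborSet v).ncard ≤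
        ((F.connectedComponentMk v).supp \ {v}).ncard :=
      Set.ncard_le_ncard hsub (Set.toFinite _)
    have h2 : ((F.connectedComponentMk v).supp \ {v}).ncard = compSize F v - 1 :=
      Set.ncard_diff_singleton_of_mem hv
    have h3 : 1 ≤ compSize F v := by
      have : (F.connectedComponentMk v).supp.Nonempty := ⟨v, hv⟩
      have := Set.ncard_pos (Set.toFinite _) |>.mpr this
      exact this
    have := hB v
    omega
  have hh : ∑ v : Fin n, (clG F).degree v = 2 * (clG F).edgeFinset.card :=
    sum_degrees_eq_twice_card_edges _
  have hle : ∑ v : Fin n, (clG F).degree v ≤ n * r := by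
    calc ∑ v : Fin n, (clG F).degree v ≤ ∑ _v : Fin n, r :=
          Finset.sum_le_sum fun v _ => by have := hdeg v; omega
      _ = n * r := by simp [Finset.sum_const, Finset.card_univ]
  rw [ncard_edgeSet, ← hh]
  exact hle

lemma sum_powerset_weight {ι : Type*} [DecidableEq ι] (p : ℝ) (D : Finset ι) :
    ∑ S ∈ D.powerset, p ^ S.card * (1 - p) ^ (D.card - S.card) = 1 := by
  calc ∑ S ∈ D.powerset, p ^ S.card * (1 - p) ^ (D.card - S.card)
      = ∑ S ∈ D.powerset, (∏ _i ∈ S, p) * ∏ _i ∈ D \ S, (1 - p) := by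
        refine Finset.sum_congr rfl fun S hS => ?_
        rw [Finset.prod_const, Finset.prod_const, Finset.card_sdiff_of_subset (Finset.mem_powerset.mp hS)]
    _ = ∏ _i ∈ D, (p + (1 - p)) := (Finset.prod_add _ _ _).symm
    _ = 1 := by simp

lemma sum_sandwich (n : ℕ) (p q : ℝ) (F : SimpleGraph (Fin n)) :
    ∑ ω ∈ Finset.univ.filter (fun ω : SimpleGraph (Fin n) => F ≤ ω ∧ ω ≤ clG F),
        rcW n p q ω
      = q ^ Nat.card F.ConnectedComponent * p ^ F.edgeSet.ncard *
        (1 - p) ^ (n * (n - 1) / 2 - (clG F).edgeSet.ncard) := by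
  classical
  set E := n * (n - 1) / 2 with hE
  set D : Finset (Sym2 (Fin n)) := (clG F).edgeFinset \ F.edgeFinset with hD
  have hFsub : F.edgeFinset ⊆ (clG F).edgeFinset := edgeFinset_mono (le_clG F)
  have hcard : D.card + F.edgeFinset.card = (clG F).edgeFinset.card :=
    Finset.card_sdiff_add_card_eq_card hFsub
  have hcE : (clG F).edgeSet.ncard ≤ E := by
    have := ncard_edgeSet_le (clG F)
    simpa using this
  have key : ∀ ω, F ≤ ω → ω ≤ clG F →
      rcW n p q ω = (q ^ Nat.card F.ConnectedComponent * p ^ F.edgeSet.ncard *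
        (1 - p) ^ (E - (clG F).edgeSet.ncard)) *
        (p ^ (ω.edgeFinset \ F.edgeFinset).card *
          (1 - p) ^ (D.card - (ω.edgeFinset \ F.edgeFinset).card)) := by
    intro ω h1 h2
    have hkk : Nat.card ω.ConnectedComponent = Nat.card F.ConnectedComponent :=
      card_comp_eq (reach_sandwich h1 h2)
    have hsubωF : F.edgeFinset ⊆ ω.edgeFinset := edgeFinset_mono h1
    have hsubω : ω.edgeFinset ⊆ (clG F).edgeFinset := edgeFinset_mono h2
    have hsub' : ω.edgeFinset \ F.edgeFinset ⊆ D := by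
      exact Finset.sdiff_subset_sdiff hsubω (le_refl _)
    have hcards : ω.edgeSet.ncard = F.edgeSet.ncard + (ω.edgeFinset \ F.edgeFinset).card := by
      rw [ncard_edgeSet, ncard_edgeSet, ← Finset.card_sdiff_add_card_eq_card hsubωF,
        Nat.add_comm]
    have hsd : (ω.edgeFinset \ F.edgeFinset).card ≤ D.card := Finset.card_le_card hsub'
    have hcc : (clG F).edgeSet.ncard = D.card + F.edgeSet.ncard := by
      rw [ncard_edgeSet, ncard_edgeSet, hcard]
    have hexp : E - ω.edgeSet.ncard =
        (E - (clG F).edgeSet.ncard) + (D.card - (ω.edgeFinset \ F.edgeFinset).card) := by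
      omega
    rw [hcards] at hexp
    rw [rcW, hkk, hcards, ← hE, hexp, pow_add, pow_add]
    ring
  have hstep : ∑ ω ∈ Finset.univ.filter
        (fun ω : SimpleGraph (Fin n) => F ≤ ω ∧ ω ≤ clG F), rcW n p q ω
      = q ^ Nat.card F.ConnectedComponent * p ^ F.edgeSet.ncard *
          (1 - p) ^ (E - (clG F).edgeSet.ncard) *
        ∑ ω ∈ Finset.univ.filter
          (fun ω : SimpleGraph (Fin n) => F ≤ ω ∧ ω ≤ clG F),
          (p ^ (ω.edgeFinset \ F.edgeFinset).card *
            (1 - p) ^ (D.card - (ω.edgeFinset \ F.edgeFinset).card)) := by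
    rw [Finset.mul_sum]
    refine Finset.sum_congr rfl fun ω hω => ?_
    rw [Finset.mem_filter] at hω
    exact key ω hω.2.1 hω.2.2
  rw [hstep]
  have hbij : ∑ ω ∈ Finset.univ.filter
        (fun ω : SimpleGraph (Fin n) => F ≤ ω ∧ ω ≤ clG F),
        (p ^ (ω.edgeFinset \ F.edgeFinset).card *
          (1 - p) ^ (D.card - (ω.edgeFinset \ F.edgeFinset).card))
      = ∑ S ∈ D.powerset, p ^ S.card * (1 - p) ^ (D.card - S.card) := by
    refine Finset.sum_bij' (fun ω _ => ω.edgeFinset \ F.edgeFinset)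
      (fun S _ => F ⊔ fromEdgeSet ↑S) ?_ ?_ ?_ ?_ ?_
    · intro ω hω
      rw [Finset.mem_filter] at hω
      rw [Finset.mem_powerset]
      exact Finset.sdiff_subset_sdiff (edgeFinset_mono hω.2.2) (le_refl _)
    · intro S hS
      rw [Finset.mem_powerset] at hS
      rw [Finset.mem_filter]
      refine ⟨Finset.mem_univ _, le_sup_left, sup_le (le_clG F) ?_⟩
      have : (↑S : Set (Sym2 (Fin n))) ⊆ (clG F).edgeSet := by
        intro e he
        have := hS (by exact_mod_cast he)
        rw [Finset.mem_sdiff] at this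
        exact (mem_edgeFinset).mp this.1
      calc fromEdgeSet (↑S : Set (Sym2 (Fin n))) ≤ fromEdgeSet (clG F).edgeSet :=
            fromEdgeSet_mono this
        _ = clG F := fromEdgeSet_edgeSet _
    · intro ω hω
      rw [Finset.mem_filter] at hω
      have h1 := hω.2.1
      ext a b
      simp only [sup_adj, fromEdgeSet_adj, Finset.coe_sdiff, Set.mem_diff,
        Finset.mem_coe, mem_edgeFinset, mem_edgeSet]
      constructor
      · rintro (h | ⟨⟨h, _⟩, _⟩)
        · exact h1 h
        · exact h
      · intro h
        by_cases hF : F.Adj a b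
        · exact Or.inl hF
        · exact Or.inr ⟨⟨h, hF⟩, h.ne⟩
    · intro S hS
      rw [Finset.mem_powerset] at hS
      ext e
      simp only [Finset.mem_sdiff, mem_edgeFinset, edgeSet_sup, edgeSet_fromEdgeSet,
        Set.mem_union, Set.mem_diff, Set.mem_setOf_eq, Finset.mem_coe]
      constructor
      · rintro ⟨h | ⟨heS, _⟩, hnF⟩
        · exact absurd h hnF
        · exact heS
      · intro heS
        have heD := hS heS
        rw [Finset.mem_sdiff, mem_edgeFinset, mem_edgeFinset] at heD
        exact ⟨Or.inr ⟨heS, not_isDiag_of_mem_edgeSet _ heD.1⟩, heD.2⟩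
    · intro ω hω; rfl
  rw [hbij, sum_powerset_weight, mul_one]


end StmtAux

theorem stmt13 (q lam : ℝ) (n r : ℕ) (hq : 0 < q) (hn : 1 ≤ n)
    (hlam : 0 < lam) (hlamn : lam < n) (hr : 1 ≤ r) (hrn : r ≤ n) :
    Zrc n lam q (Bev n r) ≤
      Zrc n lam q (Lev n) * (1 - lam / n) ^ (-(((r : ℝ) * n) / 2)) := by
  classical
  open SimpleGraph StmtAux in
  have hn0 : (0 : ℝ) < n := by exact_mod_cast Nat.lt_of_lt_of_le Nat.zero_lt_one hn
  set p : ℝ := lam / n with hp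
  have hp0 : 0 < p := div_pos hlam hn0
  have hp1 : p < 1 := (div_lt_one hn0).mpr hlamn
  have h1p0 : (0 : ℝ) < 1 - p := by linarith
  have h1p1 : 1 - p ≤ 1 := by linarith
  have hw : ∀ G : SimpleGraph (Fin n), 0 ≤ rcW n p q G := fun G =>
    mul_nonneg (mul_nonneg (pow_nonneg hp0.le _) (pow_nonneg h1p0.le _)) (pow_nonneg hq.le _)
  set C : ℝ := (1 - p) ^ (-(((r : ℝ) * n) / 2)) with hC
  have hC0 : 0 ≤ C := Real.rpow_nonneg h1p0.le _
  have hsf := fun G : SimpleGraph (Fin n) => StmtAux.exists_spanning_forest G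
  set Φ : SimpleGraph (Fin n) → SimpleGraph (Fin n) := fun G => (hsf G).choose with hΦ
  have hΦ1 : ∀ G, Φ G ≤ G := fun G => (hsf G).choose_spec.1
  have hΦ2 : ∀ G, (Φ G).IsAcyclic := fun G => (hsf G).choose_spec.2.1
  have hΦ3 : ∀ G, ∀ a b, (Φ G).Reachable a b ↔ G.Reachable a b :=
    fun G => (hsf G).choose_spec.2.2
  set Bfin : Finset (SimpleGraph (Fin n)) := (Bev n (r : ℝ)).toFinset with hBfin
  set Fset : Finset (SimpleGraph (Fin n)) := Bfin.image Φ with hFset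
  have hZB : Zrc n lam q (Bev n r) = ∑ ω ∈ Bfin, rcW n p q ω := by
    rw [Zrc, ZP, finsum_mem_eq_toFinset_sum]
  have hZL : Zrc n lam q (Lev n) = ∑ ω ∈ (Lev n).toFinset, rcW n p q ω := by
    rw [Zrc, ZP, finsum_mem_eq_toFinset_sum]
  have hfib : ∑ ω ∈ Bfin, rcW n p q ω
      = ∑ F ∈ Fset, ∑ ω ∈ Bfin.filter (fun ω => Φ ω = F), rcW n p q ω :=
    (Finset.sum_fiberwise_of_maps_to (fun ω hω => Finset.mem_image_of_mem Φ hω) _).symm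
  have hE : Fintype.card (Fin n) * (Fintype.card (Fin n) - 1) / 2 = n * (n - 1) / 2 := by
    simp
  have hkey : ∀ F ∈ Fset,
      ∑ ω ∈ Bfin.filter (fun ω => Φ ω = F), rcW n p q ω ≤ rcW n p q F * C := by
    intro F hF
    obtain ⟨ω₀, hω₀, rfl⟩ := Finset.mem_image.mp hF
    have hω₀B : ∀ v, (compSize ω₀ v : ℝ) ≤ r := Set.mem_toFinset.mp hω₀
    have hsupp : ∀ v, compSize (Φ ω₀) v = compSize ω₀ v := fun v => by
      unfold compSize; rw [StmtAux.supp_eq (hΦ3 ω₀) v]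
    have hBF : ∀ v, compSize (Φ ω₀) v ≤ r := fun v => by
      have h := hω₀B v; rw [← hsupp v] at h; exact_mod_cast h
    have hsub : Bfin.filter (fun ω => Φ ω = Φ ω₀) ⊆
        Finset.univ.filter (fun ω => Φ ω₀ ≤ ω ∧ ω ≤ StmtAux.clG (Φ ω₀)) := by
      intro ω hω
      rw [Finset.mem_filter] at hω ⊢
      obtain ⟨-, hΦω⟩ := hω
      refine ⟨Finset.mem_univ _, hΦω ▸ hΦ1 ω, fun a b hab => ?_⟩
      rw [StmtAux.clG_adj]
      exact ⟨hab.ne, hΦω ▸ ((hΦ3 ω a b).mpr hab.reachable)⟩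
    have h1 : ∑ ω ∈ Bfin.filter (fun ω => Φ ω = Φ ω₀), rcW n p q ω ≤
        ∑ ω ∈ Finset.univ.filter
          (fun ω => Φ ω₀ ≤ ω ∧ ω ≤ StmtAux.clG (Φ ω₀)), rcW n p q ω :=
      Finset.sum_le_sum_of_subset_of_nonneg hsub (fun i _ _ => hw i)
    rw [StmtAux.sum_sandwich n p q (Φ ω₀)] at h1
    refine h1.trans ?_
    set F := Φ ω₀
    set a := F.edgeSet.ncard with ha
    set c := (StmtAux.clG F).edgeSet.ncard with hc
    set E := n * (n - 1) / 2 with hEdef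
    set k := Nat.card F.ConnectedComponent with hk
    have hac : a ≤ c :=
      Set.ncard_le_ncard (SimpleGraph.edgeSet_mono (StmtAux.le_clG F)) (Set.toFinite _)
    have hcE : c ≤ E := by
      have h := StmtAux.ncard_edgeSet_le (StmtAux.clG F)
      rwa [hE] at h
    have h2c : 2 * c ≤ n * r := StmtAux.two_mul_clG_edges_le F hBF
    have hcR : (c : ℝ) ≤ (r : ℝ) * n / 2 := by
      have : (2 * c : ℝ) ≤ (n : ℝ) * r := by exact_mod_cast h2c
      nlinarith
    have hsplit : (1 - p) ^ (E - a) = (1 - p) ^ (E - c) * (1 - p) ^ (c - a) := by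
      rw [← pow_add]
      congr 1
      omega
    have hone : 1 ≤ (1 - p) ^ (c - a) * C := by
      have h1 : ((1 - p) ^ (c - a) : ℝ) = (1 - p) ^ ((c : ℝ) - a) := by
        rw [← Real.rpow_natCast (1 - p) (c - a), Nat.cast_sub hac]
      rw [h1, hC, ← Real.rpow_add h1p0]
      have hle : (c : ℝ) - a + -(((r : ℝ) * n) / 2) ≤ 0 := by
        have : (0 : ℝ) ≤ (a : ℝ) := Nat.cast_nonneg a
        linarith
      calc (1 : ℝ) = (1 - p) ^ (0 : ℝ) := (Real.rpow_zero _).symm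
        _ ≤ (1 - p) ^ ((c : ℝ) - a + -(((r : ℝ) * n) / 2)) :=
          Real.rpow_le_rpow_of_exponent_ge h1p0 h1p1 hle
    have hnn : 0 ≤ q ^ k * p ^ a * (1 - p) ^ (E - c) :=
      mul_nonneg (mul_nonneg (pow_nonneg hq.le _) (pow_nonneg hp0.le _))
        (pow_nonneg h1p0.le _)
    calc q ^ k * p ^ a * (1 - p) ^ (E - c)
        = q ^ k * p ^ a * (1 - p) ^ (E - c) * 1 := (mul_one _).symm
      _ ≤ q ^ k * p ^ a * (1 - p) ^ (E - c) * ((1 - p) ^ (c - a) * C) :=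
          mul_le_mul_of_nonneg_left hone hnn
      _ = (p ^ a * ((1 - p) ^ (E - c) * (1 - p) ^ (c - a)) * q ^ k) * C := by ring
      _ = rcW n p q F * C := by rw [← hsplit]; rfl
  have hFL : Fset ⊆ (Lev n).toFinset := by
    intro F hF
    obtain ⟨ω₀, _, rfl⟩ := Finset.mem_image.mp hF
    exact Set.mem_toFinset.mpr (hΦ2 ω₀)
  calc Zrc n lam q (Bev n r) = ∑ ω ∈ Bfin, rcW n p q ω := hZB
    _ = ∑ F ∈ Fset, ∑ ω ∈ Bfin.filter (fun ω => Φ ω = F), rcW n p q ω := hfib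
    _ ≤ ∑ F ∈ Fset, rcW n p q F * C := Finset.sum_le_sum hkey
    _ = (∑ F ∈ Fset, rcW n p q F) * C := by rw [Finset.sum_mul]
    _ ≤ (∑ F ∈ (Lev n).toFinset, rcW n p q F) * C := by
        refine mul_le_mul_of_nonneg_right ?_ hC0
        exact Finset.sum_le_sum_of_subset_of_nonneg hFL (fun i _ _ => hw i)
    _ = Zrc n lam q (Lev n) * (1 - lam / n) ^ (-(((r : ℝ) * n) / 2)) := by rw [hZL]
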